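/- Let n ≥ 3, 2 ≤ k ≤ n, h > 0, and ξ = ξ_h a periodic solution of the radial σ_k-Yamabe ODE with first integral e^((2k-n)ξ)(1-ξ'²)^k = e^(-nξ) + h. Then the functions φ⁺(t) = e^t(1 - ξ'(t)) and φ⁻(t) = e^(-t)(1 + ξ'(t)) are solutions of the linearized ODE φ'' + (B/A)φ' + [-(n-1)C/A + (n e^(-nξ)/(e^(-nξ)+h))(1-ξ'²)]φ = 0, where A = (1-ξ'²)/2, B = -ξ'[(k-1)ξ'' + ((n-2k)/2)(1-ξ'²)], C = ((k-1)/(n-1))ξ'' + ((n-2k+1)/(n-1))(1-ξ'²)/2. -/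

import Mathlib

set_option maxHeartbeats 1000000 in
theorem key_lemma (n k : ℕ) (hn : 3 ≤ n) (hk : 2 ≤ k) (h : ℝ) (hh : 0 < h)
    (ξ : ℝ → ℝ) (hξ : ContDiff ℝ 3 ξ)
    (hpos : ∀ t, 0 < 1 - (deriv ξ t) ^ 2)
    (hode : ∀ t, deriv (deriv ξ) t
      = (n : ℝ) / (2 * k) * Real.exp (-2 * k * ξ t)
          * (1 - (deriv ξ t) ^ 2) ^ ((1 : ℝ) - k)
        - ((n : ℝ) - 2 * k) / (2 * k) * (1 - (deriv ξ t) ^ 2))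
    (hfi : ∀ t, Real.exp ((2 * (k : ℝ) - n) * ξ t) * (1 - (deriv ξ t) ^ 2) ^ k
      = Real.exp (-(n : ℝ) * ξ t) + h)
    (ε : ℝ) (hε : ε = 1 ∨ ε = -1) (t : ℝ) :
    deriv (deriv (fun s => Real.exp (ε * s) * (1 - ε * deriv ξ s))) t
      + (-(deriv ξ t) * (((k : ℝ) - 1) * deriv (deriv ξ) t
            + ((n : ℝ) - 2 * k) / 2 * (1 - (deriv ξ t) ^ 2)))
        / ((1 - (deriv ξ t) ^ 2) / 2)
        * deriv (fun s => Real.exp (ε * s) * (1 - ε * deriv ξ s)) t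
      + (-((n : ℝ) - 1) *
          ((((k : ℝ) - 1) / ((n : ℝ) - 1) * deriv (deriv ξ) t
              + ((n : ℝ) - 2 * k + 1) / ((n : ℝ) - 1) * (1 - (deriv ξ t) ^ 2) / 2)
            / ((1 - (deriv ξ t) ^ 2) / 2))
        + (n : ℝ) * Real.exp (-(n : ℝ) * ξ t) / (Real.exp (-(n : ℝ) * ξ t) + h)
          * (1 - (deriv ξ t) ^ 2))
        * ((fun s => Real.exp (ε * s) * (1 - ε * deriv ξ s)) t) = 0 := by
  have hkpos : (0:ℝ) < k := by exact_mod_cast lt_of_lt_of_le (by norm_num) hk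
  have hkne : (k:ℝ) ≠ 0 := hkpos.ne'
  have hnne : (n:ℝ) ≠ 0 := by positivity
  have hn1ne : (n:ℝ) - 1 ≠ 0 := by
    have : (3:ℝ) ≤ n := by exact_mod_cast hn
    linarith
  have hdξ : Differentiable ℝ ξ := hξ.differentiable (by norm_num)
  have h3 : ContDiff ℝ (2+1) ξ := by norm_num; exact hξ
  have h2 : ContDiff ℝ 2 (deriv ξ) := (contDiff_succ_iff_deriv.mp h3).2.2
  have hdu : Differentiable ℝ (deriv ξ) := h2.differentiable (by norm_num)
  set u := deriv ξ with hu
  set v := deriv u with hv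
  have hξd : ∀ s, HasDerivAt ξ (u s) s := fun s => (hdξ s).hasDerivAt
  have hud : ∀ s, HasDerivAt u (v s) s := fun s => (hdu s).hasDerivAt
  have hPd : ∀ s, HasDerivAt (fun s => 1 - u s ^ 2) (-(2 * u s * v s)) s := by
    intro s
    have h : HasDerivAt (fun x => 1 - u x ^ 2) _ s := ((hud s).pow 2).const_sub 1
    convert h using 1
    push_cast; ring
  have hEd : ∀ s, HasDerivAt (fun s => Real.exp (-2 * (k:ℝ) * ξ s))
      (Real.exp (-2 * (k:ℝ) * ξ s) * (-2 * (k:ℝ) * u s)) s :=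
    fun s => ((hξd s).const_mul (-2 * (k:ℝ))).exp
  have hRd : ∀ s, HasDerivAt (fun s => (1 - u s ^ 2) ^ ((1:ℝ) - (k:ℝ)))
      ((-(2 * u s * v s)) * ((1:ℝ) - (k:ℝ)) * (1 - u s ^ 2) ^ ((1:ℝ) - (k:ℝ) - 1)) s :=
    fun s => (hPd s).rpow_const (Or.inl (hpos s).ne')
  -- derivative of v via the ODE
  have hveq : v = fun s => (n : ℝ) / (2 * k) * Real.exp (-2 * k * ξ s)
          * (1 - u s ^ 2) ^ ((1 : ℝ) - k)
        - ((n : ℝ) - 2 * k) / (2 * k) * (1 - u s ^ 2) := funext hode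
  have hgd : HasDerivAt (fun s => (n : ℝ) / (2 * k) * Real.exp (-2 * k * ξ s)
          * (1 - u s ^ 2) ^ ((1 : ℝ) - k)
        - ((n : ℝ) - 2 * k) / (2 * k) * (1 - u s ^ 2))
      (((n:ℝ)/(2*(k:ℝ)) * (Real.exp (-2 * (k:ℝ) * ξ t) * (-2 * (k:ℝ) * u t)))
          * ((1 - u t ^ 2) ^ ((1:ℝ) - (k:ℝ)))
        + ((n:ℝ)/(2*(k:ℝ)) * Real.exp (-2 * (k:ℝ) * ξ t))
          * ((-(2 * u t * v t)) * ((1:ℝ) - (k:ℝ)) * (1 - u t ^ 2) ^ ((1:ℝ) - (k:ℝ) - 1))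
        - (((n:ℝ) - 2*(k:ℝ))/(2*(k:ℝ)) * (-(2 * u t * v t)))) t := by
    exact (((hEd t).const_mul ((n:ℝ)/(2*(k:ℝ)))).mul (hRd t)).sub
      ((hPd t).const_mul (((n:ℝ) - 2*(k:ℝ))/(2*(k:ℝ))))
  have hvdt : HasDerivAt v
      (((n:ℝ)/(2*(k:ℝ)) * (Real.exp (-2 * (k:ℝ) * ξ t) * (-2 * (k:ℝ) * u t)))
          * ((1 - u t ^ 2) ^ ((1:ℝ) - (k:ℝ)))
        + ((n:ℝ)/(2*(k:ℝ)) * Real.exp (-2 * (k:ℝ) * ξ t))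
          * ((-(2 * u t * v t)) * ((1:ℝ) - (k:ℝ)) * (1 - u t ^ 2) ^ ((1:ℝ) - (k:ℝ) - 1))
        - (((n:ℝ) - 2*(k:ℝ))/(2*(k:ℝ)) * (-(2 * u t * v t)))) t := by
    rw [← hveq] at hgd; exact hgd
  -- φ derivatives
  have he : ∀ s, HasDerivAt (fun s => Real.exp (ε * s)) (Real.exp (ε * s) * ε) s := by
    intro s
    have := ((hasDerivAt_id s).const_mul ε).exp
    simpa using this
  have hφ1 : ∀ s, HasDerivAt (fun s => Real.exp (ε * s) * (1 - ε * u s))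
      (Real.exp (ε * s) * ε * (1 - ε * u s) + Real.exp (ε * s) * (-(ε * v s))) s :=
    fun s => (he s).mul (((hud s).const_mul ε).const_sub 1)
  have hdφ : deriv (fun s => Real.exp (ε * s) * (1 - ε * u s))
      = fun s => Real.exp (ε * s) * ε * (1 - ε * u s) + Real.exp (ε * s) * (-(ε * v s)) :=
    funext fun s => (hφ1 s).deriv
  have hΦ2 : HasDerivAt (fun s => Real.exp (ε * s) * ε * (1 - ε * u s)
        + Real.exp (ε * s) * (-(ε * v s)))
      ((Real.exp (ε * t) * ε * ε) * (1 - ε * u t) + (Real.exp (ε * t) * ε) * (-(ε * v t))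
        + ((Real.exp (ε * t) * ε) * (-(ε * v t)) + Real.exp (ε * t) *
          (-(ε * (((n:ℝ)/(2*(k:ℝ)) * (Real.exp (-2 * (k:ℝ) * ξ t) * (-2 * (k:ℝ) * u t)))
          * ((1 - u t ^ 2) ^ ((1:ℝ) - (k:ℝ)))
        + ((n:ℝ)/(2*(k:ℝ)) * Real.exp (-2 * (k:ℝ) * ξ t))
          * ((-(2 * u t * v t)) * ((1:ℝ) - (k:ℝ)) * (1 - u t ^ 2) ^ ((1:ℝ) - (k:ℝ) - 1))
        - (((n:ℝ) - 2*(k:ℝ))/(2*(k:ℝ)) * (-(2 * u t * v t)))))))) t :=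
    (((he t).mul_const ε).mul (((hud t).const_mul ε).const_sub 1)).add
      ((he t).mul ((hvdt.const_mul ε).neg))
  have hd2 : deriv (deriv (fun s => Real.exp (ε * s) * (1 - ε * u s))) t
      = (Real.exp (ε * t) * ε * ε) * (1 - ε * u t) + (Real.exp (ε * t) * ε) * (-(ε * v t))
        + ((Real.exp (ε * t) * ε) * (-(ε * v t)) + Real.exp (ε * t) *
          (-(ε * (((n:ℝ)/(2*(k:ℝ)) * (Real.exp (-2 * (k:ℝ) * ξ t) * (-2 * (k:ℝ) * u t)))
          * ((1 - u t ^ 2) ^ ((1:ℝ) - (k:ℝ)))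
        + ((n:ℝ)/(2*(k:ℝ)) * Real.exp (-2 * (k:ℝ) * ξ t))
          * ((-(2 * u t * v t)) * ((1:ℝ) - (k:ℝ)) * (1 - u t ^ 2) ^ ((1:ℝ) - (k:ℝ) - 1))
        - (((n:ℝ) - 2*(k:ℝ))/(2*(k:ℝ)) * (-(2 * u t * v t))))))) := by
    rw [hdφ]; exact hΦ2.deriv
  -- algebraic facts
  have hPpos := hpos t
  have hPne : (1 - u t ^ 2) ≠ 0 := hPpos.ne'
  have hRpos : (0:ℝ) < (1 - u t ^ 2) ^ ((1:ℝ) - (k:ℝ)) := Real.rpow_pos_of_pos hPpos _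
  have hRne := hRpos.ne'
  have hX : (n:ℝ) * (Real.exp (-2 * (k:ℝ) * ξ t) * (1 - u t ^ 2) ^ ((1:ℝ) - (k:ℝ)))
      = 2 * (k:ℝ) * v t + ((n:ℝ) - 2 * (k:ℝ)) * (1 - u t ^ 2) := by
    have h0 := hode t
    field_simp at h0
    ring_nf at h0 ⊢
    linear_combination -h0
  have hRPk : (1 - u t ^ 2) ^ ((1:ℝ) - (k:ℝ)) * (1 - u t ^ 2) ^ k = 1 - u t ^ 2 := by
    rw [← Real.rpow_natCast (1 - u t ^ 2) k, ← Real.rpow_add hPpos]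
    norm_num
  have hR2 : (1 - u t ^ 2) ^ ((1:ℝ) - (k:ℝ) - 1)
      = (1 - u t ^ 2) ^ ((1:ℝ) - (k:ℝ)) / (1 - u t ^ 2) := by
    rw [Real.rpow_sub hPpos, Real.rpow_one]
  have hEn : Real.exp (-(n:ℝ) * ξ t)
      = Real.exp ((2 * (k:ℝ) - n) * ξ t) * Real.exp (-2 * (k:ℝ) * ξ t) := by
    rw [← Real.exp_add]; ring_nf
  have hterm : (n : ℝ) * Real.exp (-(n : ℝ) * ξ t) / (Real.exp (-(n : ℝ) * ξ t) + h)
        * (1 - u t ^ 2)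
      = 2 * (k:ℝ) * v t + ((n:ℝ) - 2 * (k:ℝ)) * (1 - u t ^ 2) := by
    rw [← hfi t, hEn]
    have hEmne : Real.exp ((2 * (k:ℝ) - n) * ξ t) ≠ 0 := (Real.exp_pos _).ne'
    have hPkne : (1 - u t ^ 2) ^ k ≠ 0 := pow_ne_zero _ hPne
    rw [div_mul_eq_mul_div, div_eq_iff (by positivity)]
    linear_combination (Real.exp ((2 * (k:ℝ) - n) * ξ t) * (1 - u t ^ 2) ^ k) * hX
      - ((n:ℝ) * Real.exp ((2 * (k:ℝ) - n) * ξ t) * Real.exp (-2 * (k:ℝ) * ξ t)) * hRPk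
  have hE : Real.exp (-2 * (k:ℝ) * ξ t)
      = (2 * (k:ℝ) * v t + ((n:ℝ) - 2 * (k:ℝ)) * (1 - u t ^ 2))
        / ((n:ℝ) * (1 - u t ^ 2) ^ ((1:ℝ) - (k:ℝ))) := by
    rw [eq_div_iff (by positivity)]
    linear_combination hX
  rw [hd2, hdφ, hterm, hR2, hE]
  rcases hε with rfl | rfl <;>
  · field_simp
    ring

/-- For a periodic radial solution `ξ = ξ_h` (`h > 0`) of the σ_k-Yamabe ODE,
`φ⁺(t) = e^t(1-ξ'(t))` and `φ⁻(t) = e^(-t)(1+ξ'(t))` solve the linearized ODE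
`φ'' + (B/A)φ' + [-(n-1)C/A + (n e^(-nξ)/(e^(-nξ)+h))(1-ξ'²)]φ = 0`. -/
theorem translation_solutions_of_linearized (n k : ℕ) (hn : 3 ≤ n) (hk : 2 ≤ k)
    (hkn : k ≤ n) (h : ℝ) (hh : 0 < h) (ξ : ℝ → ℝ) (hξ : ContDiff ℝ 3 ξ)
    (T : ℝ) (hT : 0 < T) (hper : Function.Periodic ξ T)
    (hpos : ∀ t, 0 < 1 - (deriv ξ t) ^ 2)
    (hode : ∀ t, deriv (deriv ξ) t
      = (n : ℝ) / (2 * k) * Real.exp (-2 * k * ξ t)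
          * (1 - (deriv ξ t) ^ 2) ^ ((1 : ℝ) - k)
        - ((n : ℝ) - 2 * k) / (2 * k) * (1 - (deriv ξ t) ^ 2))
    (hfi : ∀ t, Real.exp ((2 * (k : ℝ) - n) * ξ t) * (1 - (deriv ξ t) ^ 2) ^ k
      = Real.exp (-(n : ℝ) * ξ t) + h) :
    ∀ φ : ℝ → ℝ,
      (φ = fun t => Real.exp t * (1 - deriv ξ t)) ∨
      (φ = fun t => Real.exp (-t) * (1 + deriv ξ t)) →
      ∀ t,
        deriv (deriv φ) t
          + (-(deriv ξ t) * (((k : ℝ) - 1) * deriv (deriv ξ) t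
                + ((n : ℝ) - 2 * k) / 2 * (1 - (deriv ξ t) ^ 2)))
            / ((1 - (deriv ξ t) ^ 2) / 2) * deriv φ t
          + (-((n : ℝ) - 1) *
              ((((k : ℝ) - 1) / ((n : ℝ) - 1) * deriv (deriv ξ) t
                  + ((n : ℝ) - 2 * k + 1) / ((n : ℝ) - 1) * (1 - (deriv ξ t) ^ 2) / 2)
                / ((1 - (deriv ξ t) ^ 2) / 2))
            + (n : ℝ) * Real.exp (-(n : ℝ) * ξ t) / (Real.exp (-(n : ℝ) * ξ t) + h)
              * (1 - (deriv ξ t) ^ 2)) * φ t = 0 := by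
  intro φ hφ t
  rcases hφ with rfl | rfl
  · have hfun : (fun t => Real.exp t * (1 - deriv ξ t))
        = fun s => Real.exp ((1:ℝ) * s) * (1 - (1:ℝ) * deriv ξ s) := by
      funext s; rw [one_mul, one_mul]
    rw [hfun]
    exact key_lemma n k hn hk h hh ξ hξ hpos hode hfi 1 (Or.inl rfl) t
  · have hfun : (fun t => Real.exp (-t) * (1 + deriv ξ t))
        = fun s => Real.exp ((-1:ℝ) * s) * (1 - (-1:ℝ) * deriv ξ s) := by
      funext s; rw [neg_one_mul, neg_one_mul, sub_neg_eq_add]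
    rw [hfun]
    exact key_lemma n k hn hk h hh ξ hξ hpos hode hfi (-1) (Or.inr rfl) t
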